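/- Let n ≥ 1 and let p : ({0,1}^n) → ℝ be a probability distribution (nonnegative, summing to 1) on bit strings of length n, encoded as p : (Fin n → Bool) → ℝ. For each i ∈ Fin n let m_i = ∑_{x : x_i = 0} p(x) be the marginal probability of outcome 0 on bit i. Then (1/2)·∑_{x ∈ {0,1}^n} |p(x) − 2^{−n}| ≥ (1/n)·∑_{i=1}^{n} (m_i − 1/2)². -/

import Mathlib

/-- Averaged marginal bound (Eq. (A17) of the paper): for a probability distribution `p` on
`{0,1}ⁿ` with marginals `m i` of outcome `0` on each bit `i`, the total variation distance from
uniform satisfies `(1/2)·∑ₓ |p(x) − 2⁻ⁿ| ≥ (1/n)·∑ᵢ (mᵢ − 1/2)²`. -/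
theorem averaged_marginal_bound (n : ℕ) (hn : 1 ≤ n) (p : (Fin n → Bool) → ℝ)
    (hpos : ∀ x, 0 ≤ p x) (hsum : ∑ x, p x = 1)
    (m : Fin n → ℝ)
    (hm : ∀ i, m i = ∑ x ∈ Finset.univ.filter (fun x : Fin n → Bool => x i = false), p x) :
    (1 / 2) * ∑ x, |p x - ((2 : ℝ) ^ n)⁻¹| ≥ (1 / n) * ∑ i, (m i - 1 / 2) ^ 2 := by
  set δ : ℝ := (1 / 2) * ∑ x, |p x - ((2 : ℝ) ^ n)⁻¹| with hδ
  have hδ0 : 0 ≤ δ := by positivity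
  have hcardtot : Fintype.card (Fin n → Bool) = 2 ^ n := by simp
  have key : ∀ i, (m i - 1 / 2) ^ 2 ≤ δ := by
    intro i
    set S := Finset.univ.filter (fun x : Fin n → Bool => x i = false) with hS
    set T := Finset.univ.filter (fun x : Fin n → Bool => ¬ x i = false) with hT
    have hcardeq : S.card = T.card := by
      apply Finset.card_nbij' (fun x => Function.update x i (!(x i)))
        (fun x => Function.update x i (!(x i)))
      · intro x hx
        simp only [hS, Finset.mem_coe, Finset.mem_filter, Finset.mem_univ, true_and] at hx
        simp [hT, Function.update_self, hx]
      · intro x hx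
        simp only [hT, Finset.mem_coe, Finset.mem_filter, Finset.mem_univ, true_and] at hx
        simp [hS, Function.update_self, Bool.not_eq_false] at hx ⊢
        simp [hx]
      · intro x _
        funext j
        by_cases h : j = i
        · subst h; simp
        · simp [Function.update_of_ne h]
      · intro x _
        funext j
        by_cases h : j = i
        · subst h; simp
        · simp [Function.update_of_ne h]
    have hcardsum : S.card + T.card = 2 ^ n := by
      rw [hS, hT, Finset.card_filter_add_card_filter_not, ← hcardtot]
      simp
    have hcardS : (S.card : ℝ) = 2 ^ n / 2 := by
      have : (S.card : ℕ) * 2 = 2 ^ n := by omega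
      have h2 : ((S.card : ℕ) * 2 : ℝ) = (2 : ℝ) ^ n := by exact_mod_cast congrArg (Nat.cast : ℕ → ℝ) this
      push_cast at h2
      linarith
    have hsumu : ∑ x ∈ S, ((2 : ℝ) ^ n)⁻¹ = 1 / 2 := by
      rw [Finset.sum_const, nsmul_eq_mul, hcardS]
      field_simp
    have hmi : m i - 1 / 2 = ∑ x ∈ S, (p x - ((2 : ℝ) ^ n)⁻¹) := by
      rw [Finset.sum_sub_distrib, hsumu, hm i, hS]
    -- total sum of p - u is zero
    have htot : ∑ x, (p x - ((2 : ℝ) ^ n)⁻¹) = 0 := by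
      rw [Finset.sum_sub_distrib, hsum, Finset.sum_const, nsmul_eq_mul]
      have : ((Finset.univ : Finset (Fin n → Bool)).card : ℝ) = 2 ^ n := by
        rw [Finset.card_univ, hcardtot]; push_cast; ring
      rw [this]
      field_simp
      ring
    have hsplit : ∑ x ∈ S, (p x - ((2 : ℝ) ^ n)⁻¹) + ∑ x ∈ T, (p x - ((2 : ℝ) ^ n)⁻¹) = 0 := by
      rw [hS, hT, Finset.sum_filter_add_sum_filter_not]
      exact htot
    have habs : |m i - 1 / 2| ≤ δ := by
      have h1 : |∑ x ∈ S, (p x - ((2 : ℝ) ^ n)⁻¹)| ≤ ∑ x ∈ S, |p x - ((2 : ℝ) ^ n)⁻¹| :=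
        Finset.abs_sum_le_sum_abs _ _
      have h2 : |∑ x ∈ T, (p x - ((2 : ℝ) ^ n)⁻¹)| ≤ ∑ x ∈ T, |p x - ((2 : ℝ) ^ n)⁻¹| :=
        Finset.abs_sum_le_sum_abs _ _
      have h3 : ∑ x ∈ S, |p x - ((2 : ℝ) ^ n)⁻¹| + ∑ x ∈ T, |p x - ((2 : ℝ) ^ n)⁻¹|
          = ∑ x, |p x - ((2 : ℝ) ^ n)⁻¹| := by
        rw [hS, hT, Finset.sum_filter_add_sum_filter_not]
      have h4 : |∑ x ∈ T, (p x - ((2 : ℝ) ^ n)⁻¹)| = |∑ x ∈ S, (p x - ((2 : ℝ) ^ n)⁻¹)| := by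
        have : ∑ x ∈ T, (p x - ((2 : ℝ) ^ n)⁻¹) = -∑ x ∈ S, (p x - ((2 : ℝ) ^ n)⁻¹) := by
          linarith
        rw [this, abs_neg]
      rw [hmi, hδ]
      linarith [h1, h2, h3, h4]
    have hm01 : 0 ≤ m i ∧ m i ≤ 1 := by
      constructor
      · rw [hm i]; exact Finset.sum_nonneg fun x _ => hpos x
      · rw [hm i, ← hsum]
        exact Finset.sum_le_sum_of_subset_of_nonneg (Finset.filter_subset _ _)
          (fun x _ _ => hpos x)
    have habs1 : |m i - 1 / 2| ≤ 1 := by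
      rw [abs_le]; constructor <;> linarith [hm01.1, hm01.2]
    nlinarith [sq_abs (m i - 1 / 2), abs_nonneg (m i - 1 / 2)]
  have hsumle : ∑ i, (m i - 1 / 2) ^ 2 ≤ n * δ := by
    calc ∑ i, (m i - 1 / 2) ^ 2 ≤ ∑ _i : Fin n, δ := Finset.sum_le_sum fun i _ => key i
    _ = n * δ := by rw [Finset.sum_const, nsmul_eq_mul]; simp
  have hn0 : (0 : ℝ) < n := by exact_mod_cast hn
  rw [ge_iff_le]
  rw [div_mul_eq_mul_div, one_mul, div_le_iff₀ hn0]
  linarith [hsumle]
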